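/- Let π, π' ∈ S_n be permutations with the same last symbol x (π[n] = π'[n] = x). Then any permutation π* ∈ S_n minimizing d_U(π*, π) + d_U(π*, π') satisfies π*[n] = x. -/

import Mathlib

/-- Length of a longest common subsequence of two strings (lists over ℕ). -/
noncomputable def LCS (x y : List ℕ) : ℕ :=
  sSup {k | ∃ s : List ℕ, s.Sublist x ∧ s.Sublist y ∧ s.length = k}

/-- Ulam distance between permutations, via `d_U(σ,τ) = |σ| − LCS(σ,τ)`. -/
noncomputable def ulamDist (x y : List ℕ) : ℕ := x.length - LCS x y

/-- `π` is a permutation of `[n] = {1,…,n}` viewed as a string. -/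
def IsPermOf (n : ℕ) (π : List ℕ) : Prop := π.Perm (List.range' 1 n)

lemma lcs_bdd (a b : List ℕ) :
    BddAbove {k | ∃ s : List ℕ, s.Sublist a ∧ s.Sublist b ∧ s.length = k} := by
  refine ⟨a.length, ?_⟩
  rintro k ⟨s, hs, -, rfl⟩
  exact hs.length_le

lemma length_le_lcs {a b s : List ℕ} (h1 : s.Sublist a) (h2 : s.Sublist b) :
    s.length ≤ LCS a b :=
  le_csSup (lcs_bdd a b) ⟨s, h1, h2, rfl⟩

lemma exists_lcs (a b : List ℕ) :
    ∃ s : List ℕ, s.Sublist a ∧ s.Sublist b ∧ s.length = LCS a b := by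
  have hne : {k | ∃ s : List ℕ, s.Sublist a ∧ s.Sublist b ∧ s.length = k}.Nonempty :=
    ⟨0, ⟨[], List.nil_sublist _, List.nil_sublist _, rfl⟩⟩
  exact Nat.sSup_mem hne (lcs_bdd a b)

lemma lcs_le_length (a b : List ℕ) : LCS a b ≤ a.length := by
  obtain ⟨s, h1, -, h3⟩ := exists_lcs a b
  exact h3 ▸ h1.length_le

/-- Merging lemma: two sublists of `a` have a common sublist of length
at least `|u| + |v| - |a|`. -/
lemma merge_sublists : ∀ (a u v : List ℕ), u.Sublist a → v.Sublist a →
    ∃ w : List ℕ, w.Sublist u ∧ w.Sublist v ∧ u.length + v.length ≤ a.length + w.length := by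
  intro a
  induction a with
  | nil =>
    intro u v hu hv
    rw [List.sublist_nil] at hu hv
    subst hu; subst hv
    exact ⟨[], List.Sublist.refl _, List.Sublist.refl _, by simp⟩
  | cons c a ih =>
    intro u v hu hv
    rcases List.sublist_cons_iff.mp hu with hu' | ⟨u₂, rfl, hu₂⟩
    · rcases List.sublist_cons_iff.mp hv with hv' | ⟨v₂, rfl, hv₂⟩
      · obtain ⟨w, w1, w2, w3⟩ := ih u v hu' hv'
        exact ⟨w, w1, w2, by simp; omega⟩
      · obtain ⟨w, w1, w2, w3⟩ := ih u v₂ hu' hv₂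
        exact ⟨w, w1, w2.trans (List.sublist_cons_self c v₂), by simp; omega⟩
    · rcases List.sublist_cons_iff.mp hv with hv' | ⟨v₂, rfl, hv₂⟩
      · obtain ⟨w, w1, w2, w3⟩ := ih u₂ v hu₂ hv'
        exact ⟨w, w1.trans (List.sublist_cons_self c u₂), w2, by simp; omega⟩
      · obtain ⟨w, w1, w2, w3⟩ := ih u₂ v₂ hu₂ hv₂
        exact ⟨c :: w, w1.cons₂ c, w2.cons₂ c, by simp; omega⟩

lemma unique_split : ∀ (a₁ : List ℕ) {b₁ : List ℕ} (a₂ : List ℕ) {b₂ : List ℕ} {x : ℕ},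
    a₁ ++ x :: b₁ = a₂ ++ x :: b₂ → x ∉ a₁ → x ∉ a₂ → a₁ = a₂ ∧ b₁ = b₂ := by
  intro a₁
  induction a₁ with
  | nil =>
    intro b₁ a₂ b₂ x h h1 h2
    cases a₂ with
    | nil => simpa using h
    | cons c a₂' =>
      simp only [List.nil_append, List.cons_append, List.cons.injEq] at h
      exact absurd (h.1 ▸ List.mem_cons_self (a := c) (l := a₂')) h2
  | cons c a₁' ih =>
    intro b₁ a₂ b₂ x h h1 h2
    cases a₂ with
    | nil =>
      simp only [List.nil_append, List.cons_append, List.cons.injEq] at h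
      exact absurd (h.1 ▸ List.mem_cons_self (a := c) (l := a₁')) h1
    | cons d a₂' =>
      simp only [List.cons_append, List.cons.injEq] at h
      obtain ⟨rfl, h⟩ := h
      have h1' : x ∉ a₁' := fun hx => h1 (List.mem_cons_of_mem _ hx)
      have h2' : x ∉ a₂' := fun hx => h2 (List.mem_cons_of_mem _ hx)
      obtain ⟨rfl, rfl⟩ := ih a₂' h h1' h2'
      exact ⟨rfl, rfl⟩

/-- A sublist of `ρ ++ [x]` with `x ∉ ρ` either avoids `x` or ends with `x`. -/
lemma sublist_concat_split {s ρ : List ℕ} {x : ℕ} (h : s.Sublist (ρ ++ [x])) (hx : x ∉ ρ) :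
    (x ∉ s ∧ s.Sublist ρ) ∨ ∃ t, s = t ++ [x] ∧ x ∉ t ∧ t.Sublist ρ := by
  obtain ⟨l₁, l₂, rfl, h1, h2⟩ := List.sublist_append_iff.mp h
  have hxl₁ : x ∉ l₁ := fun hmem => hx (h1.subset hmem)
  rcases List.sublist_cons_iff.mp h2 with h' | ⟨r, rfl, hr⟩
  · rw [List.sublist_nil] at h'
    subst h'
    exact Or.inl ⟨by simpa using hxl₁, by simpa using h1⟩
  · rw [List.sublist_nil] at hr
    subst hr
    exact Or.inr ⟨l₁, rfl, hxl₁, h1⟩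

/-- Any common subsequence of `πs` and `ρ' ++ [x]` (with `x ∉ ρ'`) is a sublist of
`πs.erase x ++ [x]`. -/
lemma cs_to_sigma {πs ρ' s : List ℕ} {x : ℕ} (hs1 : s.Sublist πs)
    (hs2 : s.Sublist (ρ' ++ [x])) (hx : x ∉ ρ') :
    s.Sublist (πs.erase x ++ [x]) := by
  rcases sublist_concat_split hs2 hx with ⟨hxs, -⟩ | ⟨t, rfl, hxt, -⟩
  · have h : s.Sublist (πs.erase x) := by
      have h' := List.Sublist.erase x hs1
      rwa [List.erase_of_not_mem hxs] at h'
    exact h.trans (List.sublist_append_left _ _)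
  · have ht : t.Sublist (πs.erase x) := by
      have h' : t.Sublist πs := ((List.sublist_append_left t [x]).trans hs1)
      have h'' := List.Sublist.erase x h'
      rwa [List.erase_of_not_mem hxt] at h''
    exact ht.append (List.Sublist.refl [x])

lemma sublist_middle_split {s A B t : List ℕ} {x : ℕ}
    (hs : s.Sublist (A ++ x :: B)) (hseq : s = t ++ [x]) (hxt : x ∉ t)
    (hxA : x ∉ A) (hxB : x ∉ B) : t.Sublist A := by
  obtain ⟨l₁, l₂, hsplit, h1, h2⟩ := List.sublist_append_iff.mp hs
  rcases List.sublist_cons_iff.mp h2 with h' | ⟨r, rfl, hr⟩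
  · exfalso
    have hxs : x ∈ s := hseq ▸ List.mem_append_right t (List.mem_singleton_self x)
    rw [hsplit] at hxs
    rcases List.mem_append.mp hxs with hmem | hmem
    · exact hxA (h1.subset hmem)
    · exact hxB (h'.subset hmem)
  · have heq : t ++ x :: [] = l₁ ++ x :: r := by rw [← hseq, hsplit]
    obtain ⟨rfl, -⟩ := unique_split t l₁ heq hxt (fun hmem => hxA (h1.subset hmem))
    exact h1

/-- If some maximum common subsequence of `πs` and `π` avoids `x`, then moving `x`
to the end of `πs` strictly decreases the sum of Ulam distances. -/
lemma good_case (n : ℕ) (πs π π' : List ℕ) (hπs : IsPermOf n πs)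
    (ρ ρ' : List ℕ) (x : ℕ) (hπeq : π = ρ ++ [x]) (hπ'eq : π' = ρ' ++ [x])
    (hxρ : x ∉ ρ) (hxρ' : x ∉ ρ') (hxπs : x ∈ πs)
    (s : List ℕ) (hs1 : s.Sublist πs) (hs2 : s.Sublist π) (hsl : s.length = LCS πs π)
    (hxs : x ∉ s) :
    ∃ σ, IsPermOf n σ ∧ ulamDist σ π + ulamDist σ π' < ulamDist πs π + ulamDist πs π' := by
  set σ : List ℕ := πs.erase x ++ [x] with hσdef
  have hnπs : πs.length = n := hπs.length_eq.trans (by simp)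
  have hσperm : IsPermOf n σ :=
    ((List.perm_append_singleton x (πs.erase x)).trans
      (List.perm_cons_erase hxπs).symm).trans hπs
  have hσlen : σ.length = n := hσperm.length_eq.trans (by simp)
  -- s ++ [x] is a common sublist of σ and π
  have hserase : s.Sublist (πs.erase x) := by
    have h' := List.Sublist.erase x hs1
    rwa [List.erase_of_not_mem hxs] at h'
  have hsρ : s.Sublist ρ := by
    rcases sublist_concat_split (hπeq ▸ hs2) hxρ with ⟨-, h⟩ | ⟨t, rfl, hxt, -⟩
    · exact h
    · simp at hxs
  have hkey1 : s.length + 1 ≤ LCS σ π := by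
    have hsub1 : (s ++ [x]).Sublist σ := hserase.append (List.Sublist.refl [x])
    have hsub2 : (s ++ [x]).Sublist π := by
      rw [hπeq]; exact hsρ.append (List.Sublist.refl [x])
    have h := length_le_lcs hsub1 hsub2
    simpa using h
  have hkey2 : LCS πs π' ≤ LCS σ π' := by
    obtain ⟨s', h1', h2', h3'⟩ := exists_lcs πs π'
    have hσ' : s'.Sublist σ := cs_to_sigma h1' (hπ'eq ▸ h2') hxρ'
    exact h3' ▸ length_le_lcs hσ' h2'
  have hsn : s.length < n := by
    rcases lt_or_eq_of_le (le_of_le_of_eq hs1.length_le hnπs) with h | h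
    · exact h
    · exfalso
      apply hxs
      have heq : s = πs := hs1.eq_of_length (by rw [h, hnπs])
      rw [heq]; exact hxπs
  have hb1 : LCS σ π ≤ n := le_of_le_of_eq (lcs_le_length σ π) hσlen
  have hb2 : LCS σ π' ≤ n := le_of_le_of_eq (lcs_le_length σ π') hσlen
  have hb3 : LCS πs π' ≤ n := le_of_le_of_eq (lcs_le_length πs π') hnπs
  refine ⟨σ, hσperm, ?_⟩
  simp only [ulamDist, hσlen, hnπs]
  omega

theorem median_same_last_symbol (n : ℕ) (π π' : List ℕ)
    (hπ : IsPermOf n π) (hπ' : IsPermOf n π')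
    (x : ℕ) (hlast : π.getLast? = some x) (hlast' : π'.getLast? = some x)
    (πs : List ℕ) (hπs : IsPermOf n πs)
    (hmedian : ∀ σ, IsPermOf n σ →
      ulamDist πs π + ulamDist πs π' ≤ ulamDist σ π + ulamDist σ π') :
    πs.getLast? = some x := by
  obtain ⟨ρ, hπeq⟩ := List.getLast?_eq_some_iff.mp hlast
  obtain ⟨ρ', hπ'eq⟩ := List.getLast?_eq_some_iff.mp hlast'
  have hnπ : π.length = n := hπ.length_eq.trans (by simp)
  have hnπ' : π'.length = n := hπ'.length_eq.trans (by simp)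
  have hnπs : πs.length = n := hπs.length_eq.trans (by simp)
  have hnodupπ : π.Nodup := hπ.nodup_iff.mpr (List.nodup_range' (s := 1) (n := n))
  have hnodupπ' : π'.Nodup := hπ'.nodup_iff.mpr (List.nodup_range' (s := 1) (n := n))
  have hnodupπs : πs.Nodup := hπs.nodup_iff.mpr (List.nodup_range' (s := 1) (n := n))
  have hxρ : x ∉ ρ := by
    have h := hnodupπ
    rw [hπeq, show ρ ++ [x] = ρ ++ x :: [] from rfl, List.nodup_middle] at h
    have := (List.nodup_cons.mp h).1
    simpa using this
  have hxρ' : x ∉ ρ' := by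
    have h := hnodupπ'
    rw [hπ'eq, show ρ' ++ [x] = ρ' ++ x :: [] from rfl, List.nodup_middle] at h
    have := (List.nodup_cons.mp h).1
    simpa using this
  have hxπ : x ∈ π := by rw [hπeq]; simp
  have hxπs : x ∈ πs := hπs.mem_iff.mpr (hπ.mem_iff.mp hxπ)
  by_contra hgoal
  -- decompose πs = C ++ [y] with y ≠ x
  have hπsne : πs ≠ [] := by rintro rfl; simp at hxπs
  obtain ⟨C, y, hCy⟩ : ∃ C y, πs = C ++ [y] :=
    ⟨πs.dropLast, πs.getLast hπsne, (List.dropLast_append_getLast hπsne).symm⟩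
  have hyx : y ≠ x := by
    rintro rfl
    exact hgoal (by rw [hCy]; exact List.getLast?_concat)
  obtain ⟨s, hs1, hs2, hsl⟩ := exists_lcs πs π
  obtain ⟨s', hs1', hs2', hsl'⟩ := exists_lcs πs π'
  by_cases hxs : x ∈ s
  · by_cases hxs' : x ∈ s'
    · -- hard case: both maximum common subsequences contain x
      -- decompose s = t ++ [x], s' = t' ++ [x]
      rcases sublist_concat_split (hπeq ▸ hs2) hxρ with ⟨hns, -⟩ | ⟨t, hst, hxt, htρ⟩
      · exact hns hxs
      rcases sublist_concat_split (hπ'eq ▸ hs2') hxρ' with ⟨hns', -⟩ | ⟨t', hst', hxt', htρ'⟩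
      · exact hns' hxs'
      -- decompose πs = A ++ x :: B with x ∉ A, x ∉ B, B ≠ []
      have hxC : x ∈ C := by
        rw [hCy] at hxπs
        rcases List.mem_append.mp hxπs with h | h
        · exact h
        · exact absurd (List.mem_singleton.mp h).symm hyx
      obtain ⟨A, B', hAB⟩ := List.append_of_mem hxC
      have hπsAB : πs = A ++ x :: (B' ++ [y]) := by
        rw [hCy, hAB]; simp
      have hnodup2 : (x :: (A ++ (B' ++ [y]))).Nodup := by
        rw [← List.nodup_middle, ← hπsAB]; exact hnodupπs
      have hxAB := (List.nodup_cons.mp hnodup2).1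
      have hxA : x ∉ A := fun h => hxAB (List.mem_append_left _ h)
      have hxB : x ∉ B' ++ [y] := fun h => hxAB (List.mem_append_right _ h)
      -- t and t' are sublists of A
      have htA : t.Sublist A :=
        sublist_middle_split (hπsAB ▸ hs1) hst hxt hxA hxB
      have htA' : t'.Sublist A :=
        sublist_middle_split (hπsAB ▸ hs1') hst' hxt' hxA hxB
      -- merge
      obtain ⟨w, hw1, hw2, hw3⟩ := merge_sublists A t t' htA htA'
      have hwπ : (w ++ [x]).Sublist π := by
        rw [hπeq]; exact (hw1.trans htρ).append (List.Sublist.refl [x])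
      have hwπ' : (w ++ [x]).Sublist π' := by
        rw [hπ'eq]; exact (hw2.trans htρ').append (List.Sublist.refl [x])
      have hwM : w.length + 1 ≤ LCS π π' := by
        have h := length_le_lcs hwπ hwπ'
        simpa using h
      -- median inequality at σ = π
      have hmed := hmedian π hπ
      simp only [ulamDist, hnπ, hnπs] at hmed
      have hself : n ≤ LCS π π := by
        have h := length_le_lcs (List.Sublist.refl π) (List.Sublist.refl π)
        omega
      have hb0 : LCS π π ≤ n := le_of_le_of_eq (lcs_le_length π π) hnπ
      have hbM : LCS π π' ≤ n := le_of_le_of_eq (lcs_le_length π π') hnπ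
      have hbL : LCS πs π ≤ n := le_of_le_of_eq (lcs_le_length πs π) hnπs
      have hbL' : LCS πs π' ≤ n := le_of_le_of_eq (lcs_le_length πs π') hnπs
      have hlenA : A.length + B'.length + 2 = n := by
        have h := hnπs
        rw [hπsAB] at h
        simp at h
        omega
      have hLt : t.length + 1 = LCS πs π := by
        rw [← hsl, hst]; simp
      have hLt' : t'.length + 1 = LCS πs π' := by
        rw [← hsl', hst']; simp
      omega
    · -- good case on the π' side
      obtain ⟨σ, hσ, hlt⟩ := good_case n πs π' π hπs ρ' ρ x hπ'eq hπeq hxρ' hxρ hxπs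
        s' hs1' hs2' hsl' hxs'
      have h := hmedian σ hσ
      omega
  · -- good case on the π side
    obtain ⟨σ, hσ, hlt⟩ := good_case n πs π π' hπs ρ ρ' x hπeq hπ'eq hxρ hxρ' hxπs
      s hs1 hs2 hsl hxs
    have h := hmedian σ hσ
    omega
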